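/- Consider m assets with bounds v_min,i, v_max,i satisfying -1 < v_min,i < 0 < v_max,i, feedback gains α_i ≥ 0 for i = 1,…,m, and initial value X_0 > 0, with state equation X(k+1) = X(k) + Σ_{i=1}^m α_i (1+v_i(k-1)) v_i(k) X(k-1), X(0) = X(1) = X_0. If 4·Σ_{i=1}^m α_i (1+v_min,i)|v_min,i| > 1, then there exist admissible return sequences v_i (i.e., v_min,i ≤ v_i(k) ≤ v_max,i for all k) and a stage k such that X(k) ≤ 0. -/
import Mathlib


/-- Multi-asset account value: `X(0) = X(1) = X0` and
`X(k+1) = X(k) + Σᵢ αᵢ (1 + vᵢ(k-1)) vᵢ(k) X(k-1)` for `k ≥ 1`. -/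
noncomputable def accountXm (m : ℕ) (α : Fin m → ℝ) (X0 : ℝ) (v : Fin m → ℕ → ℝ) : ℕ → ℝ
  | 0 => X0
  | 1 => X0
  | (k + 2) => accountXm m α X0 v (k + 1) +
      (∑ i, α i * (1 + v i k) * v i (k + 1)) * accountXm m α X0 v k

/-- Multi-asset oscillation result: if `4 Σᵢ αᵢ (1 + v_min,i) |v_min,i| > 1`,
then there are admissible return sequences along which the account value fails
to stay positive. -/
theorem multi_asset_failure (m : ℕ) (vmin vmax : Fin m → ℝ) (α : Fin m → ℝ) (X0 : ℝ)
    (h1 : ∀ i, -1 < vmin i) (h2 : ∀ i, vmin i < 0) (h3 : ∀ i, 0 < vmax i)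
    (hα : ∀ i, 0 ≤ α i) (hX0 : 0 < X0)
    (hosc : 4 * ∑ i, α i * (1 + vmin i) * |vmin i| > 1) :
    ∃ v : Fin m → ℕ → ℝ,
      (∀ i k, vmin i ≤ v i k ∧ v i k ≤ vmax i) ∧
      ∃ k, accountXm m α X0 v k ≤ 0 := by
  set c : ℝ := ∑ i, α i * (1 + vmin i) * |vmin i| with hc_def
  have hc : 1/4 < c := by linarith
  refine ⟨fun i _ => vmin i, fun i k => ⟨le_refl _, le_of_lt ((h2 i).trans (h3 i))⟩, ?_⟩
  by_contra hcon
  push_neg at hcon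
  set X : ℕ → ℝ := accountXm m α X0 (fun i _ => vmin i) with hX
  have hpos : ∀ k, 0 < X k := hcon
  have hsum : (∑ i, α i * (1 + vmin i) * vmin i) = -c := by
    rw [hc_def, ← Finset.sum_neg_distrib]
    apply Finset.sum_congr rfl
    intro i _
    rw [abs_of_neg (h2 i)]; ring
  have hrec : ∀ k, X (k+2) = X (k+1) - c * X k := by
    intro k
    show X (k+1) + (∑ i, α i * (1 + vmin i) * vmin i) * X k = _
    rw [hsum]; ring
  have hδ : (0:ℝ) < c - 1/4 := by linarith
  have key : ∀ k : ℕ, X (k+1) / X k ≤ 1 - k * (c - 1/4) := by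
    intro k
    induction k with
    | zero =>
      have h01 : X 1 = X 0 := rfl
      rw [h01, div_self (ne_of_gt (hpos 0))]
      simp
    | succ k ih =>
      have ha := hpos k
      have hb := hpos (k+1)
      have hb' : X (k+1) ≤ (1 - k * (c - 1/4)) * X k := by
        rw [div_le_iff₀ ha] at ih
        exact ih
      have hkδ : (0:ℝ) ≤ (k:ℝ) * (c - 1/4) := by positivity
      rw [div_le_iff₀ hb, hrec k]
      push_cast
      nlinarith [mul_le_mul_of_nonneg_left hb' hkδ,
        mul_le_mul_of_nonneg_left hb' (le_of_lt hδ),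
        mul_nonneg (sq_nonneg ((k:ℝ) * (c - 1/4) - 1/2)) (le_of_lt ha),
        mul_nonneg (mul_nonneg hkδ (le_of_lt hδ)) (le_of_lt ha)]
  obtain ⟨n, hn⟩ := exists_nat_gt (1 / (c - 1/4))
  have hnδ : 1 < n * (c - 1/4) := by
    rw [div_lt_iff₀ hδ] at hn
    linarith
  have h1' := key n
  have h2' : 0 < X (n+1) / X n := div_pos (hpos (n+1)) (hpos n)
  linarith
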